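/- For every ε > 0 there exists s ∈ ℂ with Q(s) = 0, s ≠ γ̃_M and γ̃_M − ε < Re(s) < γ̃_M. Consequently, γ̃_M is an accumulation point of the set of real parts of the zeros of Q. -/

import Mathlib

/-- `Q(s) = 1 - 2∑_{k≥1} exp(-s√(k(k+2))/2)`. -/
noncomputable def Qfun (s : ℂ) : ℂ :=
  1 - 2 * ∑' k : ℕ,
    Complex.exp (-(s * (Real.sqrt (((k : ℝ) + 1) * (((k : ℝ) + 1) + 2)) : ℂ) / 2))

open Complex Real Filter Topology Metric


noncomputable def Lam (k : ℕ) : ℝ := Real.sqrt (((k : ℝ) + 1) * (((k : ℝ) + 1) + 2))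

lemma Lam_ge (k : ℕ) : (k : ℝ) + 1 ≤ Lam k := by
  have h : ((k:ℝ)+1)^2 ≤ ((k:ℝ)+1) * (((k:ℝ)+1)+2) := by nlinarith [Nat.cast_nonneg (α := ℝ) k]
  calc (k:ℝ)+1 = Real.sqrt (((k:ℝ)+1)^2) := by
        rw [Real.sqrt_sq]; positivity
    _ ≤ Lam k := Real.sqrt_le_sqrt h

lemma Lam_pos (k : ℕ) : 0 < Lam k := lt_of_lt_of_le (by positivity) (Lam_ge k)

lemma summable_exp_Lam {c : ℝ} (hc : 0 < c) :
    Summable (fun k : ℕ => Real.exp (-(c * Lam k / 2))) := by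
  have h : ∀ k : ℕ, Real.exp (-(c * Lam k / 2)) ≤ (Real.exp (-(c/2)))^(k+1) := by
    intro k
    rw [← Real.exp_nat_mul]
    apply Real.exp_le_exp.2
    have := Lam_ge k
    push_cast
    nlinarith
  apply Summable.of_nonneg_of_le (fun k => (Real.exp_pos _).le) h
  apply Summable.comp_injective ?_ (add_left_injective 1)
  exact summable_geometric_of_lt_one (Real.exp_pos _).le
    (Real.exp_lt_one_iff.2 (by linarith))

noncomputable def Ffun (s : ℂ) : ℂ := ∑' k : ℕ, Complex.exp (-(s * (Lam k : ℂ) / 2))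

lemma norm_term (s : ℂ) (k : ℕ) :
    ‖Complex.exp (-(s * (Lam k : ℂ) / 2))‖ = Real.exp (-(s.re * Lam k / 2)) := by
  rw [Complex.norm_exp]
  congr 1
  simp [Complex.div_re, Complex.normSq, Complex.ofReal_re]

lemma term_le {c : ℝ} {s : ℂ} (hs : c ≤ s.re) (k : ℕ) :
    ‖Complex.exp (-(s * (Lam k : ℂ) / 2))‖ ≤ Real.exp (-(c * Lam k / 2)) := by
  rw [norm_term]
  apply Real.exp_le_exp.2
  have := (Lam_pos k).le
  nlinarith

lemma summable_term {s : ℂ} (hs : 0 < s.re) :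
    Summable (fun k : ℕ => Complex.exp (-(s * (Lam k : ℂ) / 2))) := by
  apply Summable.of_norm
  apply Summable.of_nonneg_of_le (fun k => norm_nonneg _) (term_le le_rfl)
  exact summable_exp_Lam hs

lemma Ffun_diffOn {c : ℝ} (hc : 0 < c) :
    DifferentiableOn ℂ Ffun {s : ℂ | c < s.re} := by
  apply differentiableOn_tsum_of_summable_norm (summable_exp_Lam hc)
  · intro k
    apply Differentiable.differentiableOn
    apply Complex.differentiable_exp.comp
    fun_prop
  · exact (continuous_re.isOpen_preimage _ isOpen_Ioi : IsOpen {s : ℂ | c < s.re})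
  · intro k w hw
    exact term_le (le_of_lt hw) k

lemma Ffun_real {x : ℝ} (hx : 0 < x) :
    Ffun (x : ℂ) = ((∑' k : ℕ, Real.exp (-(x * Lam k / 2)) : ℝ) : ℂ) := by
  rw [Complex.ofReal_tsum]
  unfold Ffun
  congr 1
  ext k
  rw [Complex.ofReal_exp]
  norm_cast

lemma dirichlet_sim (N M : ℕ) (hM : 0 < M) (α : ℕ → ℝ) :
    ∃ q : ℕ, 0 < q ∧ ∀ k < N, ∃ z : ℤ, |(q : ℝ) * α k - z| < 1 / M := by
  have hMR : (0:ℝ) < M := by exact_mod_cast hM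
  set T : ℕ → (Fin N → Fin M) := fun j k =>
    ⟨(⌊Int.fract ((j:ℝ) * α k) * M⌋).toNat, by
      have h0 : (0:ℝ) ≤ Int.fract ((j:ℝ) * α k) := Int.fract_nonneg _
      have h1 : Int.fract ((j:ℝ) * α k) < 1 := Int.fract_lt_one _
      have hlt : (⌊Int.fract ((j:ℝ) * α k) * M⌋ : ℝ) < M := by
        calc (⌊Int.fract ((j:ℝ) * α k) * M⌋ : ℝ) ≤ Int.fract ((j:ℝ) * α k) * M :=
          Int.floor_le _
        _ < 1 * M := by nlinarith
        _ = M := by ring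
      have : ⌊Int.fract ((j:ℝ) * α k) * M⌋ < (M:ℤ) := by exact_mod_cast hlt
      omega⟩ with hT
  obtain ⟨j1, hj1, j2, hj2, hne, heq⟩ :=
    Finset.exists_ne_map_eq_of_card_lt_of_maps_to (s := Finset.range (M ^ N + 1))
      (t := (Finset.univ : Finset (Fin N → Fin M)))
      (by simp [Fintype.card_fun]) (fun j _ => Finset.mem_univ (T j))
  wlog hlt : j1 < j2 generalizing j1 j2
  · exact this j2 hj2 j1 hj1 hne.symm heq.symm (by omega)
  refine ⟨j2 - j1, by omega, fun k hk => ?_⟩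
  have hfl : ⌊Int.fract ((j1:ℝ) * α k) * M⌋ = ⌊Int.fract ((j2:ℝ) * α k) * M⌋ := by
    have := congrFun heq ⟨k, hk⟩
    rw [hT] at this
    simp only [Fin.mk.injEq] at this
    have h1 : (0:ℤ) ≤ ⌊Int.fract ((j1:ℝ) * α k) * M⌋ :=
      Int.floor_nonneg.2 (mul_nonneg (Int.fract_nonneg _) hMR.le)
    have h2 : (0:ℤ) ≤ ⌊Int.fract ((j2:ℝ) * α k) * M⌋ :=
      Int.floor_nonneg.2 (mul_nonneg (Int.fract_nonneg _) hMR.le)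
    omega
  refine ⟨⌊(j2:ℝ) * α k⌋ - ⌊(j1:ℝ) * α k⌋, ?_⟩
  have hq : ((j2 - j1 : ℕ) : ℝ) = (j2:ℝ) - (j1:ℝ) := by
    push_cast [Nat.cast_sub hlt.le]; ring
  have key : ((j2 - j1 : ℕ):ℝ) * α k - ((⌊(j2:ℝ) * α k⌋ - ⌊(j1:ℝ) * α k⌋ : ℤ):ℝ)
      = Int.fract ((j2:ℝ) * α k) - Int.fract ((j1:ℝ) * α k) := by
    rw [hq]
    unfold Int.fract
    push_cast
    ring
  rw [key, abs_sub_lt_iff]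
  have h2a := Int.lt_floor_add_one (Int.fract ((j2:ℝ) * α k) * M)
  have h2b := Int.floor_le (Int.fract ((j2:ℝ) * α k) * M)
  have h1a := Int.lt_floor_add_one (Int.fract ((j1:ℝ) * α k) * M)
  have h1b := Int.floor_le (Int.fract ((j1:ℝ) * α k) * M)
  rw [← hfl] at h2a h2b
  constructor <;> rw [lt_div_iff₀ hMR] <;> nlinarith

lemma exists_zero_of_min_mod {g : ℂ → ℂ} {z₀ : ℂ} {δ m : ℝ} (hδ : 0 < δ)
    (hg : DifferentiableOn ℂ g (Metric.closedBall z₀ δ))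
    (hb : ∀ z ∈ Metric.sphere z₀ δ, m ≤ ‖g z‖) (hz : ‖g z₀‖ < m) :
    ∃ z ∈ Metric.closedBall z₀ δ, g z = 0 := by
  have mpos : 0 < m := lt_of_le_of_lt (norm_nonneg _) hz
  by_contra h
  push_neg at h
  have hcl : closure (Metric.ball z₀ δ) = Metric.closedBall z₀ δ := closure_ball z₀ hδ.ne'
  have hd : DiffContOnCl ℂ (fun z => (g z)⁻¹) (Metric.ball z₀ δ) := by
    constructor
    · exact ((hg.mono Metric.ball_subset_closedBall).inv
        (fun z hzz => h z (Metric.ball_subset_closedBall hzz)))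
    · rw [hcl]
      exact hg.continuousOn.inv₀ h
  have hfr : frontier (Metric.ball z₀ δ) = Metric.sphere z₀ δ := frontier_ball z₀ hδ.ne'
  have hmain := Complex.norm_le_of_forall_mem_frontier_norm_le (Metric.isBounded_ball)
    hd (C := m⁻¹) (fun z hzz => by
      rw [hfr] at hzz
      rw [norm_inv]
      exact inv_anti₀ mpos (hb z hzz))
    (z := z₀) (by rw [hcl]; exact Metric.mem_closedBall_self hδ.le)
  rw [norm_inv] at hmain
  have hg0 : 0 < ‖g z₀‖ := norm_pos_iff.2 (h z₀ (Metric.mem_closedBall_self hδ.le))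
  have : m ≤ ‖g z₀‖ := by
    have h2 : (m⁻¹)⁻¹ ≤ (‖g z₀‖⁻¹)⁻¹ := inv_anti₀ (by positivity) hmain
    rwa [inv_inv, inv_inv] at h2
  linarith

lemma sqrt_six_irrational : Irrational (Real.sqrt 6) := by
  have : Irrational (Real.sqrt ((6:ℕ):ℝ)) := irrational_sqrt_natCast_iff.2 (by
    rintro ⟨r, hr⟩
    have : r ≤ 6 := by nlinarith
    interval_cases r <;> omega)
  simpa using this

lemma Ffun_approx {c m' : ℝ} (hc : 0 < c) (hm : 0 < m') :
    ∃ t : ℝ, 2 ≤ t ∧ ∀ s : ℂ, c ≤ s.re → ‖Ffun (s + (t:ℂ) * I) - Ffun s‖ ≤ m' := by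
  set f : ℕ → ℝ := fun k => Real.exp (-(c * Lam k / 2)) with hf
  have hsumf : Summable f := summable_exp_Lam hc
  -- tail bound
  have htail : Tendsto (fun N => ∑' k, f (k + N)) atTop (𝓝 0) := tendsto_sum_nat_add f
  obtain ⟨N, hN⟩ : ∃ N, ∑' k, f (k + N) ≤ m' / 8 := by
    have := (htail.eventually (eventually_le_nhds (show (0:ℝ) < m'/8 by positivity))).exists
    exact this
  set S := ∑ k ∈ Finset.range N, f k with hS
  have hSpos : 0 ≤ S := Finset.sum_nonneg fun k _ => (Real.exp_pos _).le
  set M : ℕ := max 8 (⌈8 * π * (S + 1) / m'⌉₊ + 1) with hMdef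
  have hM8 : (8:ℝ) ≤ M := by
    have : (8:ℕ) ≤ M := le_max_left _ _
    exact_mod_cast this
  have hMpos : 0 < M := by
    have : (8:ℕ) ≤ M := le_max_left _ _
    omega
  have hMR : (0:ℝ) < M := by linarith
  have hMge : 8 * π * (S + 1) / m' ≤ M := by
    calc 8 * π * (S + 1) / m' ≤ ⌈8 * π * (S + 1) / m'⌉₊ := Nat.le_ceil _
      _ ≤ ((⌈8 * π * (S + 1) / m'⌉₊ + 1 : ℕ) : ℝ) := by push_cast; linarith
      _ ≤ M := by exact_mod_cast le_max_right _ _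
  obtain ⟨q, hq, hqz⟩ := dirichlet_sim N M hMpos (fun k => Lam k / 2)
  have hπ : (0:ℝ) < π := Real.pi_pos
  refine ⟨2 * π * q, ?_, ?_⟩
  · have h3 : (3:ℝ) < π := Real.pi_gt_three
    have hq1 : (1:ℝ) ≤ q := by exact_mod_cast hq
    nlinarith
  intro s hs
  have hspos : 0 < s.re := lt_of_lt_of_le hc hs
  have hs'pos : 0 < (s + ((2 * π * q : ℝ):ℂ) * I).re := by
    simp [Complex.add_re, Complex.mul_re]
    exact hspos
  have hs're : (s + ((2 * π * q : ℝ):ℂ) * I).re = s.re := by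
    simp [Complex.add_re, Complex.mul_re]
  -- the termwise difference
  set E : ℕ → ℂ := fun k => Complex.exp (-((s + ((2 * π * q : ℝ):ℂ) * I) * (Lam k : ℂ) / 2))
    - Complex.exp (-(s * (Lam k : ℂ) / 2)) with hE
  have hdiff : Ffun (s + ((2 * π * q : ℝ):ℂ) * I) - Ffun s = ∑' k, E k := by
    rw [Ffun, Ffun, ← Summable.tsum_sub (summable_term hs'pos) (summable_term hspos)]
  -- factorization
  set phase : ℕ → ℂ := fun k => Complex.exp (((-(2 * π * q * (Lam k / 2)) : ℝ) : ℂ) * I)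
    with hphase
  have hfac : ∀ k, E k = Complex.exp (-(s * (Lam k : ℂ) / 2)) * (phase k - 1) := by
    intro k
    rw [hE, hphase]
    simp only
    rw [mul_sub, ← Complex.exp_add, mul_one]
    congr 2
    push_cast
    ring
  -- phase bounds
  have hphase_norm : ∀ k, ‖phase k‖ = 1 := by
    intro k
    rw [hphase]
    simp only
    rw [Complex.norm_exp]
    norm_num
  have hph_small : ∀ k < N, ‖phase k - 1‖ ≤ 4 * π / M := by
    intro k hk
    obtain ⟨z, hz⟩ := hqz k hk
    have hsplit : ((-(2 * π * q * (Lam k / 2)) : ℝ) : ℂ) * I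
        = ((-z : ℤ):ℂ) * (2 * π * I) + ((-(2 * π * ((q:ℝ) * (Lam k / 2) - z)) : ℝ) : ℂ) * I := by
      push_cast
      ring
    have hexp : phase k = Complex.exp (((-(2 * π * ((q:ℝ) * (Lam k / 2) - z)) : ℝ) : ℂ) * I) := by
      rw [hphase]
      simp only
      rw [hsplit, Complex.exp_add, Complex.exp_int_mul_two_pi_mul_I, one_mul]
    rw [hexp]
    have habs : ‖(((-(2 * π * ((q:ℝ) * (Lam k / 2) - z)) : ℝ) : ℂ) * I)‖
        = 2 * π * |(q:ℝ) * (Lam k / 2) - z| := by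
      rw [norm_mul, Complex.norm_I, Complex.norm_real, Real.norm_eq_abs, mul_one, abs_neg, abs_mul]
      rw [abs_of_pos (by positivity : (0:ℝ) < 2 * π)]
    have hle1 : ‖(((-(2 * π * ((q:ℝ) * (Lam k / 2) - z)) : ℝ) : ℂ) * I)‖ ≤ 1 := by
      rw [habs]
      have h1 : |(q:ℝ) * (Lam k / 2) - z| ≤ 1 / M := hz.le
      have h5 : (1:ℝ)/M ≤ 1/8 := by
        rw [div_le_div_iff₀ hMR (by norm_num)]
        linarith
      nlinarith [abs_nonneg ((q:ℝ) * (Lam k / 2) - z), Real.pi_le_four, Real.pi_pos]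
    have := Complex.norm_exp_sub_one_le hle1
    calc ‖Complex.exp _ - 1‖
        ≤ 2 * ‖(((-(2 * π * ((q:ℝ) * (Lam k / 2) - z)) : ℝ) : ℂ) * I)‖ := this
      _ ≤ 2 * (2 * π * (1/M)) := by
          rw [habs]
          have h1 : |(q:ℝ) * (Lam k / 2) - z| ≤ 1 / M := hz.le
          nlinarith
      _ = 4 * π / M := by field_simp; ring
  have hph_two : ∀ k, ‖phase k - 1‖ ≤ 2 := by
    intro k
    calc ‖phase k - 1‖ ≤ ‖phase k‖ + ‖(1:ℂ)‖ := norm_sub_le _ _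
      _ = 2 := by rw [hphase_norm]; norm_num
  -- norm bounds on E
  have hEb : ∀ k, ‖E k‖ ≤ f k * ‖phase k - 1‖ := by
    intro k
    rw [hfac, norm_mul]
    exact mul_le_mul_of_nonneg_right (term_le hs k) (norm_nonneg _)
  have hsumE : Summable (fun k => ‖E k‖) := by
    apply Summable.of_nonneg_of_le (fun k => norm_nonneg _) ?_ (hsumf.mul_left 2)
    intro k
    calc ‖E k‖ ≤ f k * ‖phase k - 1‖ := hEb k
      _ ≤ f k * 2 := mul_le_mul_of_nonneg_left (hph_two k) (Real.exp_pos _).le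
      _ = 2 * f k := by ring
  -- main estimate
  rw [hdiff]
  calc ‖∑' k, E k‖ ≤ ∑' k, ‖E k‖ := norm_tsum_le_tsum_norm hsumE
    _ = (∑ k ∈ Finset.range N, ‖E k‖) + ∑' k, ‖E (k + N)‖ :=
        (hsumE.sum_add_tsum_nat_add N).symm
    _ ≤ (∑ k ∈ Finset.range N, f k * (4 * π / M)) + ∑' k, 2 * f (k + N) := by
        apply add_le_add
        · apply Finset.sum_le_sum
          intro k hk
          calc ‖E k‖ ≤ f k * ‖phase k - 1‖ := hEb k
            _ ≤ f k * (4 * π / M) :=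
                mul_le_mul_of_nonneg_left (hph_small k (Finset.mem_range.1 hk))
                  (Real.exp_pos _).le
        · apply Summable.tsum_le_tsum ?_ (hsumE.comp_injective (add_left_injective N))
            (((summable_nat_add_iff N).2 hsumf).mul_left 2)
          intro k
          calc ‖E (k + N)‖ ≤ f (k + N) * ‖phase (k + N) - 1‖ := hEb _
            _ ≤ f (k + N) * 2 := mul_le_mul_of_nonneg_left (hph_two _) (Real.exp_pos _).le
            _ = 2 * f (k + N) := by ring
    _ ≤ S * (4 * π / M) + 2 * (m' / 8) := by
        apply add_le_add
        · rw [← Finset.sum_mul]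
        · rw [tsum_mul_left]
          have h2 : ∑' k, f (k + N) ≤ m' / 8 := hN
          nlinarith [hN]
    _ ≤ m' / 2 + m' / 4 := by
        apply add_le_add
        · have h1 : 8 * π * (S + 1) ≤ (M:ℝ) * m' := by
            rw [div_le_iff₀ hm] at hMge
            linarith
          have h2 : S * (4 * π / M) = 4 * π * S / M := by ring
          rw [h2, div_le_iff₀ hMR]
          nlinarith
        · linarith
    _ ≤ m' := by linarith

lemma re_lt_gamma {γ : ℝ} (hγpos : 0 < γ)
    (hγ : ∑' k : ℕ, Real.exp (-(γ * Lam k / 2)) = 1 / 2)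
    {s : ℂ} (hs : Ffun s = 1 / 2) (him : s.im ≠ 0) : s.re < γ := by
  by_contra hre
  push_neg at hre    -- γ ≤ s.re
  have hspos : 0 < s.re := lt_of_lt_of_le hγpos hre
  set t := s.im with ht
  -- real parts of the terms
  have hterm_re : ∀ k, (Complex.exp (-(s * (Lam k : ℂ) / 2))).re
      = Real.exp (-(Lam k) / 2 * s.re) * Real.cos (-(Lam k) / 2 * t) := by
    intro k
    have hz : (-(s * (Lam k : ℂ) / 2)) = ((-(Lam k) / 2 : ℝ) : ℂ) * s := by
      push_cast; ring
    rw [hz, Complex.exp_re, Complex.re_ofReal_mul, Complex.im_ofReal_mul]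
  set a : ℕ → ℝ := fun k => Real.exp (-(γ * Lam k / 2)) with ha
  set b : ℕ → ℝ := fun k => Real.exp (-(Lam k) / 2 * s.re) * Real.cos (-(Lam k) / 2 * t)
    with hb
  have hsum_a : Summable a := summable_exp_Lam hγpos
  have hsum_b : Summable b := by
    apply Summable.of_norm
    apply Summable.of_nonneg_of_le (fun k => norm_nonneg _) ?_ (summable_exp_Lam hspos)
    intro k
    rw [norm_mul, Real.norm_eq_abs, Real.norm_eq_abs, Real.abs_exp]
    calc Real.exp (-(Lam k) / 2 * s.re) * |Real.cos (-(Lam k) / 2 * t)|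
        ≤ Real.exp (-(Lam k) / 2 * s.re) * 1 :=
          mul_le_mul_of_nonneg_left (abs_cos_le_one _) (Real.exp_pos _).le
      _ = Real.exp (-(s.re * Lam k / 2)) := by rw [mul_one]; congr 1; ring
  have hble : ∀ k, b k ≤ a k := by
    intro k
    have h1 : Real.exp (-(Lam k) / 2 * s.re) ≤ Real.exp (-(γ * Lam k / 2)) := by
      apply Real.exp_le_exp.2
      have := (Lam_pos k).le
      nlinarith
    calc b k ≤ Real.exp (-(Lam k) / 2 * s.re) * 1 :=
          mul_le_mul_of_nonneg_left (Real.cos_le_one _) (Real.exp_pos _).le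
      _ ≤ a k := by rw [mul_one]; exact h1
  have hsum_eq : ∑' k, b k = 1 / 2 := by
    have h1 : (Ffun s).re = ∑' k, b k := by
      rw [Ffun, Complex.re_tsum (summable_term hspos)]
      exact tsum_congr hterm_re
    rw [hs] at h1
    norm_num at h1
    exact h1.symm
  -- each a k = b k
  have hall : ∀ k, a k = b k := by
    by_contra hcon
    push_neg at hcon
    obtain ⟨j, hj⟩ := hcon
    have hpos : 0 < ∑' k, (a k - b k) := by
      apply Summable.tsum_pos (hsum_a.sub hsum_b) (fun k => sub_nonneg.2 (hble k)) j
      exact sub_pos.2 (lt_of_le_of_ne (hble j) (Ne.symm hj))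
    rw [Summable.tsum_sub hsum_a hsum_b, hγ, hsum_eq] at hpos
    norm_num at hpos
  -- deduce cos = 1 for each k
  have hcos : ∀ k, Real.cos (Lam k / 2 * t) = 1 := by
    intro k
    have hk : Real.exp (-(γ * Lam k / 2))
        = Real.exp (-(Lam k) / 2 * s.re) * Real.cos (-(Lam k) / 2 * t) := hall k
    have he1 : Real.exp (-(Lam k) / 2 * s.re) ≤ Real.exp (-(γ * Lam k / 2)) := by
      apply Real.exp_le_exp.2
      have := (Lam_pos k).le
      nlinarith
    have hcpos : 0 < Real.cos (-(Lam k) / 2 * t) := by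
      by_contra hc
      push_neg at hc
      have h0 : Real.exp (-(Lam k) / 2 * s.re) * Real.cos (-(Lam k) / 2 * t) ≤ 0 :=
        mul_nonpos_of_nonneg_of_nonpos (Real.exp_pos _).le hc
      rw [← hk] at h0
      linarith [Real.exp_pos (-(γ * Lam k / 2))]
    have h1 : Real.cos (-(Lam k) / 2 * t) = 1 := by
      have hle1 : Real.cos (-(Lam k) / 2 * t) ≤ 1 := Real.cos_le_one _
      by_contra hne1
      have hlt1 : Real.cos (-(Lam k) / 2 * t) < 1 := lt_of_le_of_ne hle1 hne1
      have : Real.exp (-(γ * Lam k / 2)) < Real.exp (-(γ * Lam k / 2)) := by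
        calc Real.exp (-(γ * Lam k / 2))
            = Real.exp (-(Lam k) / 2 * s.re) * Real.cos (-(Lam k) / 2 * t) := hk
          _ < Real.exp (-(Lam k) / 2 * s.re) * 1 :=
              (mul_lt_mul_iff_right₀ (Real.exp_pos _)).2 hlt1
          _ ≤ Real.exp (-(γ * Lam k / 2)) := by rw [mul_one]; exact he1
      exact lt_irrefl _ this
    have : Real.cos (Lam k / 2 * t) = Real.cos (-(Lam k) / 2 * t) := by
      rw [show -(Lam k) / 2 * t = -(Lam k / 2 * t) by ring, Real.cos_neg]
    rw [this, h1]
  -- extract integer relations for k = 0 and k = 1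
  have hL0 : Lam 0 = Real.sqrt 3 := by
    unfold Lam; norm_num
  have hL1 : Lam 1 = Real.sqrt 8 := by
    unfold Lam; norm_num
  obtain ⟨n, hn⟩ := (Real.cos_eq_one_iff _).1 (hcos 0)
  obtain ⟨m, hm⟩ := (Real.cos_eq_one_iff _).1 (hcos 1)
  rw [hL0] at hn  -- n * (2π) = √3 / 2 * t
  rw [hL1] at hm  -- m * (2π) = √8 / 2 * t
  have h8 : Real.sqrt 8 = 2 * Real.sqrt 2 := by
    rw [show (8:ℝ) = 2^2 * 2 by norm_num, Real.sqrt_mul (by positivity), Real.sqrt_sq]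
    norm_num
  rw [h8] at hm   -- m * (2π) = 2√2/2 * t = √2 * t
  have h23 : Real.sqrt 2 * Real.sqrt 3 = Real.sqrt 6 := by
    rw [← Real.sqrt_mul (by norm_num)]; norm_num
  have h33 : Real.sqrt 3 * Real.sqrt 3 = 3 :=
    Real.mul_self_sqrt (by norm_num)
  have hπ : (0:ℝ) < π := Real.pi_pos
  have hs3 : (0:ℝ) < Real.sqrt 3 := Real.sqrt_pos.2 (by norm_num)
  have hn0 : n ≠ 0 := by
    intro h0
    rw [h0] at hn
    have h1 : Real.sqrt 3 / 2 * t = 0 := by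
      push_cast at hn
      linarith
    rcases mul_eq_zero.1 h1 with h | h
    · linarith
    · exact him h
  have key : ((m:ℝ) * Real.sqrt 3 - 2 * n * Real.sqrt 2) * (2 * π) = 0 := by
    linear_combination Real.sqrt 3 * hm - 2 * Real.sqrt 2 * hn
  have h2 : (m:ℝ) * Real.sqrt 3 = 2 * n * Real.sqrt 2 := by
    have := mul_eq_zero.1 key
    rcases this with h | h
    · linarith [sub_eq_zero.1 h]
    · exfalso; nlinarith
  have h3 : 3 * (m:ℝ) = 2 * n * Real.sqrt 6 := by
    linear_combination Real.sqrt 3 * h2 - (m:ℝ) * h33 + 2 * (n:ℝ) * h23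
  have h6p : (0:ℝ) < Real.sqrt 6 := Real.sqrt_pos.2 (by norm_num)
  have hm0 : (m:ℝ) ≠ 0 := by
    intro h0
    rw [h0] at h3
    have h1 : (2 * (n:ℝ)) * Real.sqrt 6 = 0 := by linarith
    rcases mul_eq_zero.1 h1 with h | h
    · have : (n:ℝ) = 0 := by linarith
      exact hn0 (by exact_mod_cast this)
    · linarith
  -- √6 = 3m / (2n)
  have h6eq : Real.sqrt 6 = ((3 * m : ℤ):ℝ) / ((2 * n : ℤ):ℝ) := by
    have h2n : ((2 * n : ℤ):ℝ) ≠ 0 := by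
      push_cast
      simp [Int.cast_ne_zero.2 hn0]
    rw [eq_div_iff h2n]
    push_cast
    linarith [h3]
  exact (irrational_iff_ne_rational _).1 sqrt_six_irrational (3 * m) (2 * n) (mul_ne_zero two_ne_zero hn0)
    (by push_cast at h6eq ⊢; exact h6eq)

lemma Qfun_eq (s : ℂ) : Qfun s = 1 - 2 * Ffun s := rfl

/-- if `γ̃_M` is the unique positive real with
`∑_{k≥1} exp(-γ̃_M√(k(k+2))/2) = 1/2`, then for every `ε > 0` there is a zero `s` of `Q`
with `s ≠ γ̃_M` and `γ̃_M - ε < Re(s) < γ̃_M`; hence `γ̃_M` is an accumulation point of the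
real parts of the zeros of `Q`. -/
theorem stmt_15 (γ : ℝ) (hγpos : 0 < γ)
    (hγ : ∑' k : ℕ,
        Real.exp (-(γ * Real.sqrt (((k : ℝ) + 1) * (((k : ℝ) + 1) + 2)) / 2)) = 1 / 2)
    (ε : ℝ) (hε : 0 < ε) :
    ∃ s : ℂ, Qfun s = 0 ∧ s ≠ (γ : ℂ) ∧ γ - ε < s.re ∧ s.re < γ := by
  have hγ' : ∑' k : ℕ, Real.exp (-(γ * Lam k / 2)) = 1 / 2 := hγ
  -- value at γ
  have hFγ : Ffun (γ : ℂ) = 1 / 2 := by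
    rw [Ffun_real hγpos, hγ']
    norm_num
  set U : Set ℂ := {z : ℂ | γ / 4 < z.re} with hU
  have hUopen : IsOpen U := continuous_re.isOpen_preimage _ isOpen_Ioi
  have hFdiff : DifferentiableOn ℂ Ffun U := Ffun_diffOn (by positivity)
  set f : ℂ → ℂ := fun z => Ffun z - 1 / 2 with hfdef
  have hfdiff : DifferentiableOn ℂ f U := hFdiff.sub_const _
  have hγU : (γ : ℂ) ∈ U := by
    simp only [hU, Set.mem_setOf_eq, Complex.ofReal_re]
    linarith
  have hfa : AnalyticAt ℂ f (γ : ℂ) :=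
    hfdiff.analyticAt (hUopen.mem_nhds hγU)
  -- f is not eventually zero near γ
  have hne : ∀ᶠ z in 𝓝[≠] (γ : ℂ), f z ≠ 0 := by
    rcases hfa.eventually_eq_zero_or_eventually_ne_zero with h | h
    · exfalso
      rw [Metric.eventually_nhds_iff] at h
      obtain ⟨r, hr, hball⟩ := h
      obtain ⟨x, hxpos, hxlt, hdist⟩ :
          ∃ x : ℝ, 0 < x ∧ x < γ ∧ dist (x : ℂ) (γ : ℂ) < r := by
        refine ⟨γ - min r γ / 2, ?_, ?_, ?_⟩
        · have h1 : min r γ ≤ γ := min_le_right _ _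
          have h2 : 0 < min r γ := lt_min hr hγpos
          linarith
        · have h2 : 0 < min r γ := lt_min hr hγpos
          linarith
        · rw [Complex.dist_eq]
          have heq : (((γ - min r γ / 2 : ℝ) : ℂ) - (γ : ℂ)) = ((- (min r γ / 2) : ℝ) : ℂ) := by
            push_cast; ring
          rw [heq, Complex.norm_real, Real.norm_eq_abs]
          have h1 : min r γ ≤ r := min_le_left _ _
          have h2 : 0 < min r γ := lt_min hr hγpos
          rw [abs_of_neg (by linarith)]
          linarith
      have hzero := hball hdist
      -- but f x ≠ 0 since the real sum is > 1/2
      have hlt : (1:ℝ) / 2 < ∑' k : ℕ, Real.exp (-(x * Lam k / 2)) := by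
        rw [← hγ']
        apply Summable.tsum_lt_tsum (i := 0)
        · intro k
          apply Real.exp_le_exp.2
          have h1 := (Lam_pos k).le
          nlinarith [mul_nonneg (sub_nonneg.2 hxlt.le) h1]
        · apply Real.exp_lt_exp.2
          have h1 := Lam_pos 0
          nlinarith [mul_pos (sub_pos.2 hxlt) h1]
        · exact summable_exp_Lam hγpos
        · exact summable_exp_Lam hxpos
      have : f (x : ℂ) ≠ 0 := by
        rw [hfdef]
        simp only
        rw [Ffun_real hxpos]
        intro hcon
        rw [sub_eq_zero] at hcon
        have h9 : ((∑' k : ℕ, Real.exp (-(x * Lam k / 2)) : ℝ) : ℂ) = ((1/2 : ℝ) : ℂ) := by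
          rw [hcon]; norm_num
        have h10 := Complex.ofReal_inj.1 h9
        linarith
      exact this hzero
    · exact h
  rw [eventually_nhdsWithin_iff, Metric.eventually_nhds_iff] at hne
  obtain ⟨r₁, hr₁, hball₁⟩ := hne
  -- choose the radius δ
  set δ : ℝ := min (min (ε / 2) (γ / 2)) (min (r₁ / 2) 1) with hδdef
  have hδpos : 0 < δ := by
    apply lt_min (lt_min (by positivity) (by positivity)) (lt_min (by positivity) one_pos)
  have hδε : δ ≤ ε / 2 := le_trans (min_le_left _ _) (min_le_left _ _)
  have hδγ : δ ≤ γ / 2 := le_trans (min_le_left _ _) (min_le_right _ _)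
  have hδr : δ < r₁ := lt_of_le_of_lt (le_trans (min_le_right _ _) (min_le_left _ _))
    (by linarith)
  have hδ1 : δ ≤ 1 := le_trans (min_le_right _ _) (min_le_right _ _)
  -- membership facts
  have hball_re : ∀ z ∈ Metric.closedBall (γ : ℂ) δ, γ - δ ≤ z.re := by
    intro z hz
    rw [Metric.mem_closedBall, Complex.dist_eq] at hz
    have h1 : |z.re - γ| ≤ ‖z - (γ : ℂ)‖ := by
      have : (z - (γ : ℂ)).re = z.re - γ := by simp
      rw [← this]
      exact Complex.abs_re_le_norm _
    have := abs_le.1 (le_trans h1 hz)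
    linarith [this.1]
  have hball_U : ∀ z ∈ Metric.closedBall (γ : ℂ) δ, z ∈ U := by
    intro z hz
    have := hball_re z hz
    simp only [hU, Set.mem_setOf_eq]
    linarith
  have hsphere_ball : Metric.sphere (γ : ℂ) δ ⊆ Metric.closedBall (γ : ℂ) δ :=
    Metric.sphere_subset_closedBall
  -- minimum on the sphere
  have hSne : (Metric.sphere (γ : ℂ) δ).Nonempty :=
    NormedSpace.sphere_nonempty.2 hδpos.le
  obtain ⟨w, hwS, hwmin⟩ := (isCompact_sphere (γ : ℂ) δ).exists_isMinOn hSne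
    (continuous_norm.comp_continuousOn
      (hfdiff.continuousOn.mono (fun z hz => hball_U z (hsphere_ball hz))))
  set m : ℝ := ‖f w‖ with hm
  have hmpos : 0 < m := by
    rw [hm, norm_pos_iff]
    apply hball₁ ?_ ?_
    · rw [mem_sphere_iff_norm] at hwS
      rw [Complex.dist_eq]
      calc ‖w - (γ:ℂ)‖ = δ := hwS
        _ < r₁ := hδr
    · rw [mem_sphere_iff_norm] at hwS
      intro hcon
      rw [hcon] at hwS
      simp at hwS
      linarith
  -- approximation
  have hcpos : 0 < γ - δ := by linarith
  obtain ⟨t, ht2, happ⟩ := Ffun_approx hcpos (show (0:ℝ) < m / 3 by positivity)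
  -- the shifted function
  set g : ℂ → ℂ := fun z => Ffun (z + (t:ℂ) * I) - 1 / 2 with hgdef
  have hgdiff : DifferentiableOn ℂ g (Metric.closedBall (γ : ℂ) δ) := by
    apply DifferentiableOn.sub_const
    apply DifferentiableOn.comp hFdiff
    · exact (differentiable_id.add_const _).differentiableOn
    · intro z hz
      have h1 := hball_re z hz
      simp only [hU, Set.mem_setOf_eq, Complex.add_re, Complex.mul_re, Complex.I_re,
        Complex.ofReal_re, Complex.I_im, Complex.ofReal_im]
      simp
      linarith
  have hgb : ∀ z ∈ Metric.sphere (γ : ℂ) δ, 2 * m / 3 ≤ ‖g z‖ := by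
    intro z hz
    have hzre : γ - δ ≤ z.re := hball_re z (hsphere_ball hz)
    have h1 : ‖Ffun (z + (t:ℂ) * I) - Ffun z‖ ≤ m / 3 := happ z hzre
    have h2 : m ≤ ‖f z‖ := hwmin hz
    have h3 : g z = f z + (Ffun (z + (t:ℂ) * I) - Ffun z) := by
      rw [hgdef, hfdef]; ring
    rw [h3]
    calc 2 * m / 3 ≤ ‖f z‖ - ‖Ffun (z + (t:ℂ) * I) - Ffun z‖ := by linarith
      _ ≤ ‖f z + (Ffun (z + (t:ℂ) * I) - Ffun z)‖ := by
          have h5 := norm_sub_le (f z + (Ffun (z + (t:ℂ) * I) - Ffun z))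
            (Ffun (z + (t:ℂ) * I) - Ffun z)
          simp only [add_sub_cancel_right] at h5
          linarith
  have hgc : ‖g (γ : ℂ)‖ < 2 * m / 3 := by
    have h1 : g (γ : ℂ) = Ffun ((γ:ℂ) + (t:ℂ) * I) - Ffun (γ : ℂ) := by
      rw [hgdef, hFγ]
    rw [h1]
    have := happ (γ : ℂ) (by simp; linarith)
    calc ‖Ffun ((γ:ℂ) + (t:ℂ) * I) - Ffun (γ:ℂ)‖ ≤ m / 3 := this
      _ < 2 * m / 3 := by linarith
  obtain ⟨z₀, hz₀ball, hz₀⟩ := exists_zero_of_min_mod hδpos hgdiff hgb hgc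
  -- the zero
  have hF5 : Ffun (z₀ + (t:ℂ) * I) = 1 / 2 := by
    have h := hz₀
    rw [hgdef] at h
    simp only at h
    exact sub_eq_zero.1 h
  have him : (z₀ + (t:ℂ) * I).im ≠ 0 := by
    have h1 : |z₀.im| ≤ δ := by
      rw [Metric.mem_closedBall, Complex.dist_eq] at hz₀ball
      have h2 : (z₀ - (γ:ℂ)).im = z₀.im := by simp
      calc |z₀.im| = |(z₀ - (γ:ℂ)).im| := by rw [h2]
        _ ≤ ‖z₀ - (γ:ℂ)‖ := Complex.abs_im_le_norm _
        _ ≤ δ := hz₀ball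
    have h3 : (z₀ + (t:ℂ) * I).im = z₀.im + t := by simp
    rw [h3]
    have h4 := abs_le.1 h1
    intro hcon
    linarith [h4.1, h4.2]
  have hre0 : (z₀ + (t:ℂ) * I).re = z₀.re := by simp
  have hreb : γ - δ ≤ z₀.re := hball_re z₀ hz₀ball
  refine ⟨z₀ + (t:ℂ) * I, ?_, ?_, ?_, ?_⟩
  · rw [Qfun_eq, hF5]
    ring
  · intro hcon
    apply him
    rw [hcon]
    simp
  · rw [hre0]
    linarith
  · exact re_lt_gamma hγpos hγ' hF5 him
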